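/- Suppose that: (a) for every dual vector λ and every node i, the minimizer x*_{λ,i} of l_i(·, λ) over 𝒳_i exists and there is a subgradient g_i ∈ ∂F_i(x*_{λ,i}) such that g_i + Σ_{j : (i,j)∈Ē} E_{ij}ᵀ λ_{ij} − Σ_{j : (j,i)∈Ē} E_{ij}ᵀ λ_{ji} = 0; (b) the constraints E_{ij} x_i = E_{ji} x_j, (i,j) ∈ E, are linearly independent, i.e. the stacked constraint matrix H (so that the constraints read H x = 0) has full row rank; and (c) for every (i,j) ∈ Ē there exist ε > 0 and a nonempty set M_{ij} with M_{ij} + εB ⊆ X̄_{ij} ∩ X̄_{ji}, where X̄_{ij} := {E_{ij} y : y ∈ 𝒳_i}, X̄_{ji} := {E_{ji} y : y ∈ 𝒳_j}, and B is the closed unit ball of the appropriate dimension. Then the dual function Q is radially unbounded: Q(λ) → −∞ as |λ| → ∞. (Lemma 1) -/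

import Mathlib

open Filter Set
open scoped RealInnerProductSpace Pointwise

/-- The per-node Lagrangian
`l_i(x_i, λ) = F_i(x_i) + Σ_{e : s(e)=i} ⟪λ_e, A_e x⟫ − Σ_{e : t(e)=i} ⟪λ_e, B_e x⟫`,
where `A_e x = E_{ij} x_i` and `B_e x = E_{ji} x_j` are the selection maps of edge `e = (i,j)`
viewed as maps of the full variable `x`. -/
noncomputable def nodeLagrangian {N : ℕ} {ι : Type*} [Fintype ι]
    (ndim : Fin N → ℕ) (edim : ι → ℕ) (s t : ι → Fin N)
    (Fc : ∀ i : Fin N, EuclideanSpace ℝ (Fin (ndim i)) → ℝ)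
    (A B : ∀ e : ι,
      (PiLp 2 fun i : Fin N => EuclideanSpace ℝ (Fin (ndim i))) →L[ℝ]
        EuclideanSpace ℝ (Fin (edim e)))
    (i : Fin N)
    (lam : PiLp 2 fun e : ι => EuclideanSpace ℝ (Fin (edim e)))
    (x : PiLp 2 fun i : Fin N => EuclideanSpace ℝ (Fin (ndim i))) : ℝ :=
  Fc i (x i) + ∑ e ∈ Finset.univ.filter (fun e => s e = i), ⟪lam e, A e x⟫
    - ∑ e ∈ Finset.univ.filter (fun e => t e = i), ⟪lam e, B e x⟫

/-- **Lemma 1.** Under (a) existence of minimizers `x*_{λ,i}` of `l_i(·,λ)` on `𝒳_i` together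
with the subgradient stationarity condition, (b) linear independence (full row rank) of the
stacked constraints, and (c) the interiority condition `M_{ij} + εB ⊆ X̄_{ij} ∩ X̄_{ji}`, the
dual function `Q(λ) = Σ_i l_i(x*_{λ,i}, λ)` is radially unbounded: `Q(λ) → −∞` as `|λ| → ∞`. -/
theorem lemma1_dual_radially_unbounded
    {N : ℕ} {ι : Type*} [Fintype ι]
    (ndim : Fin N → ℕ) (edim : ι → ℕ)
    -- the edges `(i, j) ∈ Ē`, i.e. `s e < t e`
    (s t : ι → Fin N) (hst : ∀ e, s e < t e)
    -- selection maps: `A e x` depends only on `x (s e)`, `B e x` only on `x (t e)`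
    (A B : ∀ e : ι,
      (PiLp 2 fun i : Fin N => EuclideanSpace ℝ (Fin (ndim i))) →L[ℝ]
        EuclideanSpace ℝ (Fin (edim e)))
    (hA : ∀ e (x y : PiLp 2 fun i : Fin N => EuclideanSpace ℝ (Fin (ndim i))),
      x (s e) = y (s e) → A e x = A e y)
    (hB : ∀ e (x y : PiLp 2 fun i : Fin N => EuclideanSpace ℝ (Fin (ndim i))),
      x (t e) = y (t e) → B e x = B e y)
    -- convex costs and convex constraint sets
    (Fc : ∀ i : Fin N, EuclideanSpace ℝ (Fin (ndim i)) → ℝ)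
    (hFc : ∀ i, ConvexOn ℝ Set.univ (Fc i))
    (𝒳 : ∀ i : Fin N, Set (EuclideanSpace ℝ (Fin (ndim i))))
    (h𝒳 : ∀ i, Convex ℝ (𝒳 i))
    -- (a) minimizers of `l_i(·, λ)` over `𝒳_i` …
    (xstar : (PiLp 2 fun e : ι => EuclideanSpace ℝ (Fin (edim e))) →
      PiLp 2 fun i : Fin N => EuclideanSpace ℝ (Fin (ndim i)))
    (hxmem : ∀ lam i, xstar lam i ∈ 𝒳 i)
    (hxmin : ∀ lam (i : Fin N) (y : EuclideanSpace ℝ (Fin (ndim i))), y ∈ 𝒳 i →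
      nodeLagrangian ndim edim s t Fc A B i lam (xstar lam) ≤
        nodeLagrangian ndim edim s t Fc A B i lam (WithLp.toLp 2 (Function.update (xstar lam) i y)))
    -- … with a subgradient `g_i ∈ ∂F_i(x*_{λ,i})` satisfying the stationarity condition
    (grad : (PiLp 2 fun e : ι => EuclideanSpace ℝ (Fin (edim e))) →
      PiLp 2 fun i : Fin N => EuclideanSpace ℝ (Fin (ndim i)))
    (hgrad : ∀ lam (i : Fin N) (y : EuclideanSpace ℝ (Fin (ndim i))),
      Fc i (xstar lam i) + ⟪grad lam i, y - xstar lam i⟫ ≤ Fc i y)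
    (hstat : ∀ lam : PiLp 2 fun e : ι => EuclideanSpace ℝ (Fin (edim e)),
      grad lam
        + ∑ e : ι, (ContinuousLinearMap.adjoint (A e)) (lam e)
        - ∑ e : ι, (ContinuousLinearMap.adjoint (B e)) (lam e) = 0)
    -- (b) the stacked constraint map `H x = (A e x − B e x)_e` has full row rank
    (hsurj : Function.Surjective
      fun x : PiLp 2 fun i : Fin N => EuclideanSpace ℝ (Fin (ndim i)) =>
        (WithLp.toLp 2 (fun e => A e x - B e x) : PiLp 2 fun e : ι => EuclideanSpace ℝ (Fin (edim e))))
    -- (c) interiority: `M_{ij} + εB ⊆ X̄_{ij} ∩ X̄_{ji}`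
    (hint : ∀ e : ι, ∃ ε > (0 : ℝ),
      ∃ M : Set (EuclideanSpace ℝ (Fin (edim e))), M.Nonempty ∧
        M + ε • Metric.closedBall (0 : EuclideanSpace ℝ (Fin (edim e))) 1 ⊆
          {z | ∃ x : PiLp 2 fun i : Fin N => EuclideanSpace ℝ (Fin (ndim i)),
              x (s e) ∈ 𝒳 (s e) ∧ z = A e x} ∩
          {z | ∃ x : PiLp 2 fun i : Fin N => EuclideanSpace ℝ (Fin (ndim i)),
              x (t e) ∈ 𝒳 (t e) ∧ z = B e x}) :
    -- the dual function `Q(λ) = Σ_i q_i(λ) = Σ_i l_i(x*_{λ,i}, λ)` is radially unbounded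
    Tendsto
      (fun lam : PiLp 2 fun e : ι => EuclideanSpace ℝ (Fin (edim e)) =>
        ∑ i : Fin N, nodeLagrangian ndim edim s t Fc A B i lam (xstar lam))
      (Bornology.cobounded _) atBot := by
  classical
  -- notation
  set Q : (PiLp 2 fun e : ι => EuclideanSpace ℝ (Fin (edim e))) → ℝ :=
    fun lam => ∑ i : Fin N, nodeLagrangian ndim edim s t Fc A B i lam (xstar lam) with hQdef
  -- the bilinear pairing φ lam x = ∑ e ⟪lam e, A e x − B e x⟫
  set φ : (PiLp 2 fun e : ι => EuclideanSpace ℝ (Fin (edim e))) →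
      (PiLp 2 fun i : Fin N => EuclideanSpace ℝ (Fin (ndim i))) → ℝ :=
    fun lam x => ∑ e : ι, (⟪lam e, A e x⟫ - ⟪lam e, B e x⟫) with hφdef
  -- Q lam = ∑ i Fc i (xstar lam i) + φ lam (xstar lam)
  have hQsum : ∀ (lam) (x : PiLp 2 fun i : Fin N => EuclideanSpace ℝ (Fin (ndim i))),
      ∑ i : Fin N, nodeLagrangian ndim edim s t Fc A B i lam x
        = ∑ i : Fin N, Fc i (x i) + φ lam x := by
    intro lam x
    simp only [nodeLagrangian, hφdef]
    rw [Finset.sum_sub_distrib, Finset.sum_add_distrib, Finset.sum_sub_distrib]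
    rw [Finset.sum_fiberwise Finset.univ s (fun e => ⟪lam e, A e x⟫),
      Finset.sum_fiberwise Finset.univ t (fun e => ⟪lam e, B e x⟫)]
    ring
  -- the inner product identity : ∑ i ⟪grad lam i, z i⟫ = - φ lam z
  have hinner : ∀ (lam) (z : PiLp 2 fun i : Fin N => EuclideanSpace ℝ (Fin (ndim i))),
      ∑ i : Fin N, ⟪grad lam i, z i⟫ = - φ lam z := by
    intro lam z
    have hg : grad lam
        = ∑ e : ι, (ContinuousLinearMap.adjoint (B e)) (lam e)
          - ∑ e : ι, (ContinuousLinearMap.adjoint (A e)) (lam e) := by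
      have := hstat lam
      have : grad lam + ∑ e : ι, (ContinuousLinearMap.adjoint (A e)) (lam e)
          = ∑ e : ι, (ContinuousLinearMap.adjoint (B e)) (lam e) := by
        rw [← sub_eq_zero]; exact this
      linear_combination (norm := abel) this
    have h1 : ∑ i : Fin N, ⟪grad lam i, z i⟫ = ⟪grad lam, z⟫ := by
      rw [PiLp.inner_apply]
    rw [h1, hg, inner_sub_left, sum_inner, sum_inner]
    simp only [ContinuousLinearMap.adjoint_inner_left]
    simp [hφdef, Finset.sum_sub_distrib]
  -- key inequality: Q lam ≤ ∑ i Fc i (y i) + φ lam y for every y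
  have key : ∀ (lam) (y : PiLp 2 fun i : Fin N => EuclideanSpace ℝ (Fin (ndim i))),
      Q lam ≤ ∑ i : Fin N, Fc i (y i) + φ lam y := by
    intro lam y
    have hsum : ∑ i : Fin N, (Fc i (xstar lam i) + ⟪grad lam i, y i - xstar lam i⟫)
        ≤ ∑ i : Fin N, Fc i (y i) :=
      Finset.sum_le_sum fun i _ => hgrad lam i (y i)
    have hsplit : ∑ i : Fin N, (Fc i (xstar lam i) + ⟪grad lam i, y i - xstar lam i⟫)
        = ∑ i : Fin N, Fc i (xstar lam i)
          + (∑ i : Fin N, ⟪grad lam i, y i⟫ - ∑ i : Fin N, ⟪grad lam i, xstar lam i⟫) := by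
      rw [Finset.sum_add_distrib, ← Finset.sum_sub_distrib]
      congr 1
      refine Finset.sum_congr rfl fun i _ => ?_
      rw [inner_sub_right]
    rw [hsplit, hinner lam y, hinner lam (xstar lam)] at hsum
    have hQx : Q lam = ∑ i : Fin N, Fc i (xstar lam i) + φ lam (xstar lam) :=
      hQsum lam (xstar lam)
    rw [hQx]
    linarith
  -- the stacked constraint map as a linear map, and a linear right inverse
  set H : (PiLp 2 fun i : Fin N => EuclideanSpace ℝ (Fin (ndim i))) →ₗ[ℝ]
      (PiLp 2 fun e : ι => EuclideanSpace ℝ (Fin (edim e))) :=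
    { toFun := fun x => WithLp.toLp 2 (fun e => A e x - B e x),
      map_add' := by
        intro x y; ext e
        simp [PiLp.add_apply, map_add]
        abel
      map_smul' := by
        intro c x; ext e
        simp [PiLp.smul_apply, map_smul, smul_sub] } with hHdef
  have hHsurj : Function.Surjective H := hsurj
  obtain ⟨T, hT⟩ := H.exists_rightInverse_of_surjective (LinearMap.range_eq_top.mpr hHsurj)
  have hHT : ∀ w, H (T w) = w := fun w => congrArg (fun f => f w) hT
  -- φ lam (T w) = ⟪lam, w⟫
  have hφT : ∀ lam w, φ lam (T w) = ⟪lam, w⟫ := by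
    intro lam w
    have : φ lam (T w) = ∑ e : ι, ⟪lam e, (H (T w)) e⟫ := by
      simp only [hφdef, hHdef, LinearMap.coe_mk, AddHom.coe_mk, inner_sub_right]
    rw [this, hHT, PiLp.inner_apply]
  -- continuity of u ↦ ∑ i Fc i (T u i)
  have hFcont : ∀ i, Continuous (Fc i) := by
    intro i
    have := (hFc i).continuousOn isOpen_univ
    exact continuousOn_univ.mp this
  have hTcont : Continuous T := T.continuous_of_finiteDimensional
  have hfc : Continuous fun u : PiLp 2 fun e : ι => EuclideanSpace ℝ (Fin (edim e)) =>
      ∑ i : Fin N, Fc i (T (-u) i) := by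
    refine continuous_finset_sum _ fun i _ => ?_
    exact (hFcont i).comp (((PiLp.continuous_apply (p := 2) (β := fun i : Fin N => EuclideanSpace ℝ (Fin (ndim i))) (i := i)).comp hTcont).comp continuous_neg)
  -- bound on the unit sphere
  have hcpt : IsCompact (Metric.sphere (0 : PiLp 2 fun e : ι =>
      EuclideanSpace ℝ (Fin (edim e))) 1) := isCompact_sphere 0 1
  obtain ⟨C, hC⟩ : ∃ C, ∀ u ∈ Metric.sphere (0 : PiLp 2 fun e : ι =>
      EuclideanSpace ℝ (Fin (edim e))) 1, ∑ i : Fin N, Fc i (T (-u) i) ≤ C := by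
    obtain ⟨C, hC⟩ := (hcpt.image_of_continuousOn hfc.continuousOn).bddAbove
    exact ⟨C, fun u hu => hC ⟨u, hu, rfl⟩⟩
  -- the estimate Q lam ≤ C − ‖lam‖ for ‖lam‖ ≥ 1
  have hest : ∀ lam : PiLp 2 fun e : ι => EuclideanSpace ℝ (Fin (edim e)),
      1 ≤ ‖lam‖ → Q lam ≤ C - ‖lam‖ := by
    intro lam hlam
    have hne : lam ≠ 0 := by
      intro h; rw [h, norm_zero] at hlam; linarith
    set u : PiLp 2 fun e : ι => EuclideanSpace ℝ (Fin (edim e)) := ‖lam‖⁻¹ • lam with hu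
    have hnorm : ‖lam‖ ≠ 0 := by positivity
    have husphere : u ∈ Metric.sphere (0 : PiLp 2 fun e : ι =>
        EuclideanSpace ℝ (Fin (edim e))) 1 := by
      simp [hu, norm_smul, abs_of_nonneg (inv_nonneg.mpr (norm_nonneg lam)),
        inv_mul_cancel₀ hnorm]
    have h1 := key lam (T (-u))
    have h2 : φ lam (T (-u)) = -‖lam‖ := by
      rw [hφT, inner_neg_right, hu, real_inner_smul_right,
        real_inner_self_eq_norm_sq]
      field_simp
    rw [h2] at h1
    have h3 := hC u husphere
    linarith
  -- conclude
  have hnormT : Tendsto (fun lam : PiLp 2 fun e : ι =>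
      EuclideanSpace ℝ (Fin (edim e)) => ‖lam‖) (Bornology.cobounded _) atTop :=
    tendsto_norm_cobounded_atTop
  have hupper : Tendsto (fun lam : PiLp 2 fun e : ι =>
      EuclideanSpace ℝ (Fin (edim e)) => C - ‖lam‖) (Bornology.cobounded _) atBot := by
    exact tendsto_atBot_add_const_left _ C (tendsto_neg_atBot_iff.mpr hnormT)
  refine tendsto_atBot_mono' _ ?_ hupper
  filter_upwards [hnormT.eventually_ge_atTop 1] with lam hlam
  exact hest lam hlam
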